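/- For every positive integer n and every subset S of {1,…,n} containing n, the number of permutations σ of {1,…,n} whose set of cycle-maxima equals S is ∏_{j ∈ {1,…,n} \ S} (n − j). -/
import Mathlib

open scoped Classical
open Equiv Equiv.Perm Finset

/-- The set of cycle-maxima of a permutation: elements maximal in their cycle. -/
noncomputable def cycleMaxSet {n : ℕ} (σ : Equiv.Perm (Fin n)) : Finset (Fin n) :=
  Finset.univ.filter (fun j => ∀ k : ℕ, (σ ^ k) j ≤ j)

lemma mem_cycleMaxSet {n : ℕ} {σ : Equiv.Perm (Fin n)} {j : Fin n} :
    j ∈ cycleMaxSet σ ↔ ∀ k : ℕ, (σ ^ k) j ≤ j := by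
  simp [cycleMaxSet]

section decomp
variable {n : ℕ} (p : Fin (n + 2)) (e : Equiv.Perm (Fin (n + 1)))

local notation "σ" => Equiv.Perm.decomposeFin.symm (p, e)

lemma orbit_succ (i : Fin (n + 1)) (k : ℕ) :
    (∃ m, (σ ^ k) i.succ = ((e ^ m) i).succ) ∨
      ((σ ^ k) i.succ = 0 ∧ ∃ m, p = ((e ^ m) i).succ) := by
  induction k with
  | zero => exact Or.inl ⟨0, rfl⟩
  | succ k ih =>
    rw [pow_succ', Equiv.Perm.mul_apply]
    rcases ih with ⟨m, hm⟩ | ⟨h0, m, hp⟩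
    · rw [hm, Equiv.Perm.decomposeFin_symm_apply_succ]
      have he : e ((e ^ m) i) = (e ^ (m + 1)) i := by
        rw [pow_succ', Equiv.Perm.mul_apply]
      rw [he]
      by_cases h2 : ((e ^ (m + 1)) i).succ = p
      · rw [h2, Equiv.swap_apply_right]
        exact Or.inr ⟨rfl, m + 1, h2.symm⟩
      · rw [Equiv.swap_apply_of_ne_of_ne (Fin.succ_ne_zero _) h2]
        exact Or.inl ⟨m + 1, rfl⟩
    · rw [h0, Equiv.Perm.decomposeFin_symm_apply_zero]
      exact Or.inl ⟨m, hp⟩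

lemma reach_succ (i : Fin (n + 1)) (m : ℕ) :
    ∃ k, (σ ^ k) i.succ = ((e ^ m) i).succ := by
  induction m with
  | zero => exact ⟨0, rfl⟩
  | succ m ih =>
    obtain ⟨k, hk⟩ := ih
    have he : e ((e ^ m) i) = (e ^ (m + 1)) i := by
      rw [pow_succ', Equiv.Perm.mul_apply]
    have hstep : (σ ^ (k + 1)) i.succ = Equiv.swap 0 p (((e ^ (m + 1)) i).succ) := by
      rw [pow_succ', Equiv.Perm.mul_apply, hk, Equiv.Perm.decomposeFin_symm_apply_succ, he]
    by_cases h2 : ((e ^ (m + 1)) i).succ = p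
    · refine ⟨k + 2, ?_⟩
      have h0 : (σ ^ (k + 1)) i.succ = 0 := by rw [hstep, h2, Equiv.swap_apply_right]
      rw [pow_succ', Equiv.Perm.mul_apply, h0, Equiv.Perm.decomposeFin_symm_apply_zero, ← h2]
    · exact ⟨k + 1, by rw [hstep, Equiv.swap_apply_of_ne_of_ne (Fin.succ_ne_zero _) h2]⟩

lemma succ_mem_cycleMaxSet_iff (i : Fin (n + 1)) :
    i.succ ∈ cycleMaxSet σ ↔ i ∈ cycleMaxSet e := by
  simp only [mem_cycleMaxSet]
  constructor
  · intro h m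
    obtain ⟨k, hk⟩ := reach_succ p e i m
    have := h k
    rw [hk] at this
    exact Fin.succ_le_succ_iff.mp this
  · intro h k
    rcases orbit_succ p e i k with ⟨m, hm⟩ | ⟨h0, -⟩
    · rw [hm]; exact Fin.succ_le_succ_iff.mpr (h m)
    · rw [h0]; exact Fin.zero_le _

lemma zero_mem_cycleMaxSet_iff :
    (0 : Fin (n + 2)) ∈ cycleMaxSet σ ↔ p = 0 := by
  simp only [mem_cycleMaxSet]
  constructor
  · intro h
    have := h 1
    rw [pow_one, Equiv.Perm.decomposeFin_symm_apply_zero] at this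
    exact Fin.le_zero_iff.mp this
  · intro hp k
    have : (σ ^ k) 0 = 0 := by
      induction k with
      | zero => rfl
      | succ k ih =>
        rw [pow_succ', Equiv.Perm.mul_apply, ih, Equiv.Perm.decomposeFin_symm_apply_zero, hp]
    rw [this]

end decomp

/-- For any subset `S` of `{1,…,n}` containing the largest element `n`, the number of
permutations whose set of cycle-maxima is `S` equals `∏_{j ∉ S} (n − j)`. -/
theorem stmt1 (n : ℕ) (S : Finset (Fin (n + 1))) (hS : Fin.last n ∈ S) :
    (Finset.univ.filter (fun σ : Equiv.Perm (Fin (n + 1)) => cycleMaxSet σ = S)).card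
      = ∏ j ∈ Sᶜ, (n - (j : ℕ)) := by
  induction n with
  | zero =>
    have h1 : ∀ j : Fin (0 + 1), j = Fin.last 0 := by decide
    have hSu : S = Finset.univ := by
      ext j
      simp only [Finset.mem_univ, iff_true]
      rw [h1 j]; exact hS
    subst hSu
    simp only [Finset.compl_univ, Finset.prod_empty]
    have hall : ∀ σ : Equiv.Perm (Fin (0 + 1)), cycleMaxSet σ = Finset.univ := by
      intro σ
      ext j
      simp only [mem_cycleMaxSet, Finset.mem_univ, iff_true]
      intro k
      rw [h1 ((σ ^ k) j), h1 j]
    rw [Finset.filter_true_of_mem (fun σ _ => hall σ)]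
    simp [Finset.card_univ]
  | succ n ih =>
    set S' : Finset (Fin (n + 1)) := Finset.univ.filter (fun i => i.succ ∈ S) with hS'def
    have hS'mem : ∀ i : Fin (n + 1), i ∈ S' ↔ i.succ ∈ S := by
      intro i; simp [hS'def]
    have hS'last : Fin.last n ∈ S' := by
      rw [hS'mem, Fin.succ_last]
      exact hS
    -- characterize the predicate through decomposeFin
    have hchar : ∀ pe : Fin (n + 2) × Equiv.Perm (Fin (n + 1)),
        cycleMaxSet (Equiv.Perm.decomposeFin.symm pe) = S ↔
          ((pe.1 = 0 ↔ (0 : Fin (n + 2)) ∈ S) ∧ cycleMaxSet pe.2 = S') := by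
      rintro ⟨p, e⟩
      constructor
      · intro h
        refine ⟨(zero_mem_cycleMaxSet_iff p e).symm.trans (by rw [h]), ?_⟩
        ext i
        rw [hS'mem, ← h, succ_mem_cycleMaxSet_iff]
      · rintro ⟨h0, he⟩
        ext j
        induction j using Fin.cases with
        | zero => rw [zero_mem_cycleMaxSet_iff, h0]
        | succ i => rw [succ_mem_cycleMaxSet_iff, he, hS'mem]
    -- transfer the count
    have hcard1 : (Finset.univ.filter
          (fun σ : Equiv.Perm (Fin (n + 2)) => cycleMaxSet σ = S)).card
        = (Finset.univ.filter (fun pe : Fin (n + 2) × Equiv.Perm (Fin (n + 1)) =>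
            (pe.1 = 0 ↔ (0 : Fin (n + 2)) ∈ S) ∧ cycleMaxSet pe.2 = S')).card := by
      apply Finset.card_equiv Equiv.Perm.decomposeFin
      intro σ
      simp only [Finset.mem_filter, Finset.mem_univ, true_and]
      rw [← hchar, Equiv.symm_apply_apply]
    have hprod : (Finset.univ.filter (fun pe : Fin (n + 2) × Equiv.Perm (Fin (n + 1)) =>
            (pe.1 = 0 ↔ (0 : Fin (n + 2)) ∈ S) ∧ cycleMaxSet pe.2 = S'))
        = (Finset.univ.filter (fun p : Fin (n + 2) => p = 0 ↔ (0 : Fin (n + 2)) ∈ S)) ×ˢ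
          (Finset.univ.filter (fun e : Equiv.Perm (Fin (n + 1)) => cycleMaxSet e = S')) := by
      ext pe
      simp only [Finset.mem_filter, Finset.mem_univ, true_and, Finset.mem_product]
    have hfirst : (Finset.univ.filter (fun p : Fin (n + 2) => p = 0 ↔ (0 : Fin (n + 2)) ∈ S)).card
        = if (0 : Fin (n + 2)) ∈ S then 1 else n + 1 := by
      by_cases h0 : (0 : Fin (n + 2)) ∈ S
      · rw [if_pos h0]
        have : (Finset.univ.filter (fun p : Fin (n + 2) => p = 0 ↔ (0 : Fin (n + 2)) ∈ S))
            = {0} := by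
          ext p; simp [h0]
        rw [this, Finset.card_singleton]
      · rw [if_neg h0]
        have : (Finset.univ.filter (fun p : Fin (n + 2) => p = 0 ↔ (0 : Fin (n + 2)) ∈ S))
            = Finset.univ.erase 0 := by
          ext p; simp [h0]
        rw [this, Finset.card_erase_of_mem (Finset.mem_univ _), Finset.card_univ,
          Fintype.card_fin]
        omega
    -- the product side
    set emb : Fin (n + 1) ↪ Fin (n + 2) := ⟨Fin.succ, Fin.succ_injective _⟩ with hemb
    have hembapp : ∀ i : Fin (n + 1), emb i = i.succ := fun _ => rfl
    have hmapmem : ∀ j : Fin (n + 1), j.succ ∈ S'ᶜ.map emb ↔ j ∈ S'ᶜ := by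
      intro j
      simp only [Finset.mem_map, hembapp]
      constructor
      · rintro ⟨a, ha, hae⟩
        rwa [Fin.succ_injective _ hae] at ha
      · intro hj; exact ⟨j, hj, rfl⟩
    have hzeronotmem : (0 : Fin (n + 2)) ∉ S'ᶜ.map emb := by
      simp only [Finset.mem_map, hembapp]
      rintro ⟨a, -, ha⟩
      exact Fin.succ_ne_zero a ha
    have hmapprod : ∏ j ∈ S'ᶜ.map emb, (n + 1 - (j : ℕ)) = ∏ i ∈ S'ᶜ, (n - (i : ℕ)) := by
      rw [Finset.prod_map]
      apply Finset.prod_congr rfl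
      intro i _
      rw [hembapp, Fin.val_succ]
      omega
    have hcompl : Sᶜ = if (0 : Fin (n + 2)) ∈ S then S'ᶜ.map emb
        else insert 0 (S'ᶜ.map emb) := by
      ext j
      induction j using Fin.cases with
      | zero =>
        by_cases h0 : (0 : Fin (n + 2)) ∈ S
        · simp [h0, hzeronotmem]
        · simp [h0]
      | succ i =>
        have : i.succ ∈ Sᶜ ↔ i ∈ S'ᶜ := by
          simp [Finset.mem_compl, hS'mem]
        rw [this]
        by_cases h0 : (0 : Fin (n + 2)) ∈ S
        · rw [if_pos h0, hmapmem]
        · rw [if_neg h0, Finset.mem_insert, hmapmem]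
          simp [Fin.succ_ne_zero]
    rw [hcard1, hprod, Finset.card_product, hfirst, ih S' hS'last, hcompl]
    by_cases h0 : (0 : Fin (n + 2)) ∈ S
    · rw [if_pos h0, if_pos h0, hmapprod, one_mul]
    · rw [if_neg h0, if_neg h0, Finset.prod_insert hzeronotmem, hmapprod]
      simp
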